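/- Let m ∈ ℕ and let {E_i}_{i=0}^m be pairwise disjoint non-empty finite sets with #E_i ≤ 2^{m+2^i}. Let ℱ be the family of all sequences (F_i)_{i=0}^m with F_i ⊆ E_i and ∑_{i=0}^m (#F_i)/2^{m-i} ≤ 1. Then log₂(#ℱ) ≤ 2^{m+3}. -/

import Mathlib

open Real

/-- `(s/e)^s ≤ s!`, in the form `s^s ≤ s! * e^s`. -/
lemma aux_pow_le_factorial_mul_exp (s : ℕ) :
    (s : ℝ) ^ s ≤ (s.factorial : ℝ) * Real.exp s := by
  induction s with
  | zero => simp
  | succ n ih =>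
    have hexp : ((n : ℝ) + 1) ^ n ≤ (n : ℝ) ^ n * Real.exp 1 := by
      rcases Nat.eq_zero_or_pos n with h | h
      · subst h; simpa using Real.one_le_exp (le_refl 1).trans_lt' (by norm_num) |>.le
      · have hn : (0 : ℝ) < n := by exact_mod_cast h
        have h1 : (1 : ℝ) + 1 / n ≤ Real.exp (1 / n) := by
          have := Real.add_one_le_exp (1 / (n : ℝ)); linarith
        have h2 : ((n : ℝ) + 1) ^ n = (n : ℝ) ^ n * (1 + 1 / n) ^ n := by
          rw [← mul_pow]; congr 1; field_simp
        rw [h2]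
        have h3 : ((1 : ℝ) + 1 / n) ^ n ≤ Real.exp (1 / n) ^ n :=
          pow_le_pow_left₀ (by positivity) h1 n
        have h4 : Real.exp (1 / (n : ℝ)) ^ n = Real.exp 1 := by
          rw [← Real.exp_nat_mul]; congr 1; field_simp
        have h5 : ((1 : ℝ) + 1 / n) ^ n ≤ Real.exp 1 := by rw [← h4]; exact h3
        have hpow : (0 : ℝ) ≤ (n : ℝ) ^ n := by positivity
        exact mul_le_mul_of_nonneg_left h5 hpow
    have hfn : (0 : ℝ) < (n.factorial : ℝ) := by exact_mod_cast n.factorial_pos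
    have hen : (0 : ℝ) < Real.exp n := Real.exp_pos _
    calc ((n + 1 : ℕ) : ℝ) ^ (n + 1) = ((n : ℝ) + 1) * ((n : ℝ) + 1) ^ n := by
          push_cast; ring
      _ ≤ ((n : ℝ) + 1) * ((n : ℝ) ^ n * Real.exp 1) := by
          apply mul_le_mul_of_nonneg_left hexp (by positivity)
      _ ≤ ((n : ℝ) + 1) * ((n.factorial : ℝ) * Real.exp n * Real.exp 1) := by
          apply mul_le_mul_of_nonneg_left _ (by positivity)
          exact mul_le_mul_of_nonneg_right ih (Real.exp_pos 1).le
      _ = (((n + 1) * n.factorial : ℕ) : ℝ) * Real.exp (n + 1) := by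
          push_cast [Real.exp_add]; ring
      _ = (((n + 1).factorial : ℕ) : ℝ) * Real.exp ((n + 1 : ℕ) : ℝ) := by
          rw [Nat.factorial_succ]; push_cast; ring

/-- `t·log(A/t) ≤ A/e`. -/
lemma aux_log_ineq (t A : ℝ) (ht : 0 < t) (hA : 0 < A) :
    t * (Real.log A - Real.log t) ≤ A / Real.exp 1 := by
  have hx : 0 < A / t := by positivity
  have h1 : Real.log (A / t) ≤ A / t / Real.exp 1 := by
    have h2 := Real.log_le_sub_one_of_pos (show (0:ℝ) < A / t / Real.exp 1 by positivity)
    rw [Real.log_div hx.ne' (Real.exp_ne_zero 1), Real.log_exp] at h2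
    linarith
  calc t * (Real.log A - Real.log t) = t * Real.log (A / t) := by
        rw [Real.log_div hA.ne' ht.ne']
    _ ≤ t * (A / t / Real.exp 1) := mul_le_mul_of_nonneg_left h1 ht.le
    _ = A / Real.exp 1 := by field_simp

/-- Key per-coordinate bound. -/
lemma aux_key (m i N s : ℕ) (hN : N ≤ 2 ^ (m + 2 ^ i)) :
    (N.choose s : ℝ) ≤ Real.exp ((s : ℝ) * 2 ^ i * Real.log 2 + (s : ℝ) * 2 ^ i
      + 2 ^ m / (Real.exp 1 * 2 ^ i)) := by
  have hRHS : (0:ℝ) ≤ (s : ℝ) * 2 ^ i * Real.log 2 + (s : ℝ) * 2 ^ i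
      + 2 ^ m / (Real.exp 1 * 2 ^ i) := by
    have := Real.log_nonneg (by norm_num : (1:ℝ) ≤ 2); positivity
  rcases Nat.eq_zero_or_pos (N.choose s) with h0 | hpos
  · rw [h0]; exact_mod_cast (Real.one_le_exp hRHS).trans_lt' (by norm_num) |>.le
  rcases Nat.eq_zero_or_pos s with hs0 | hs
  · subst hs0; simp only [Nat.choose_zero_right, Nat.cast_one]
    exact Real.one_le_exp (by simpa using hRHS)
  -- now 1 ≤ s and choose positive, hence s ≤ N
  have hsN : s ≤ N := by
    by_contra h
    exact hpos.ne' (Nat.choose_eq_zero_of_lt (by omega))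
  have hN1 : 1 ≤ N := le_trans hs hsN
  have hσ : (1:ℝ) ≤ (s : ℝ) := by exact_mod_cast hs
  have hσ0 : (0:ℝ) < (s : ℝ) := by linarith
  have hP : (1:ℝ) ≤ (2:ℝ) ^ i := one_le_pow₀ (by norm_num)
  have hP0 : (0:ℝ) < (2:ℝ) ^ i := by positivity
  have hfac : (0:ℝ) < (s.factorial : ℝ) := by exact_mod_cast s.factorial_pos
  have hNpos : (0:ℝ) < (N:ℝ) := by exact_mod_cast hN1
  -- choose ≤ N^s e^s / s^s
  have h1 : (N.choose s : ℝ) ≤ (N:ℝ) ^ s / s.factorial := Nat.choose_le_pow_div s N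
  have h2 : (N:ℝ) ^ s / s.factorial ≤ (N:ℝ) ^ s * Real.exp s / (s:ℝ) ^ s := by
    rw [div_le_div_iff₀ hfac (by positivity)]
    have haux := aux_pow_le_factorial_mul_exp s
    have hNs : (0:ℝ) ≤ (N:ℝ) ^ s := by positivity
    calc (N:ℝ) ^ s * (s:ℝ) ^ s ≤ (N:ℝ) ^ s * ((s.factorial : ℝ) * Real.exp s) :=
          mul_le_mul_of_nonneg_left haux hNs
      _ = (N:ℝ) ^ s * Real.exp s * s.factorial := by ring
  have hApos : (0:ℝ) < (N:ℝ) ^ s * Real.exp s / (s:ℝ) ^ s := by positivity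
  have hch : (N.choose s : ℝ) ≤ (N:ℝ) ^ s * Real.exp s / (s:ℝ) ^ s := h1.trans h2
  refine hch.trans ?_
  rw [← Real.log_le_iff_le_exp hApos]
  have hlogA : Real.log ((N:ℝ) ^ s * Real.exp s / (s:ℝ) ^ s)
      = (s:ℝ) * Real.log N + (s:ℝ) - (s:ℝ) * Real.log s := by
    rw [Real.log_div (by positivity) (by positivity), Real.log_mul (by positivity)
      (Real.exp_ne_zero _), Real.log_pow, Real.log_pow, Real.log_exp]
  rw [hlogA]
  have hlogN : Real.log N ≤ ((m : ℝ) + 2 ^ i) * Real.log 2 := by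
    have h := Real.log_le_log hNpos (show (N:ℝ) ≤ 2 ^ (m + 2 ^ i) by exact_mod_cast hN)
    rwa [Real.log_pow, Nat.cast_add, Nat.cast_pow, Nat.cast_ofNat] at h
  have hL1 : Real.log 2 ≤ 1 := by
    have := Real.log_le_sub_one_of_pos (show (0:ℝ) < 2 by norm_num); linarith
  have hL0 : (0:ℝ) < Real.log 2 := Real.log_pos (by norm_num)
  set L := Real.log 2 with hLdef
  set σ := (s:ℝ) with hσdef
  set P := (2:ℝ) ^ i with hPdef
  have hlogt : Real.log (σ * P) = Real.log σ + (i:ℝ) * L := by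
    rw [Real.log_mul hσ0.ne' hP0.ne', hPdef, Real.log_pow]
  -- piece C
  have hC : σ * ((m:ℝ) * L - Real.log (σ * P)) ≤ 2 ^ m / (Real.exp 1 * P) := by
    have h3 : (σ * P) * ((m:ℝ) * L - Real.log (σ * P)) ≤ (2:ℝ) ^ m / Real.exp 1 := by
      have := aux_log_ineq (σ * P) ((2:ℝ) ^ m) (by positivity) (by positivity)
      rwa [Real.log_pow] at this
    rw [show (2:ℝ) ^ m / (Real.exp 1 * P) = ((2:ℝ) ^ m / Real.exp 1) / P from by
      rw [div_div], le_div_iff₀ hP0]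
    calc σ * ((m:ℝ) * L - Real.log (σ * P)) * P
        = (σ * P) * ((m:ℝ) * L - Real.log (σ * P)) := by ring
      _ ≤ (2:ℝ) ^ m / Real.exp 1 := h3
  -- piece B
  have hBB : (i:ℝ) * L + 1 ≤ P := by
    have hi : (i:ℝ) + 1 ≤ P := by
      rw [hPdef]; exact_mod_cast Nat.lt_two_pow_self (n := i)
    nlinarith [Nat.cast_nonneg (α := ℝ) i]
  have h6 : σ * ((i:ℝ) * L + 1) ≤ σ * P := mul_le_mul_of_nonneg_left hBB hσ0.le
  have hmain : σ * Real.log N ≤ σ * (((m:ℝ) + P) * L) :=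
    mul_le_mul_of_nonneg_left hlogN hσ0.le
  have hid : σ * (((m:ℝ) + P) * L) + σ - σ * Real.log σ
      = σ * P * L + σ * ((i:ℝ) * L + 1) + σ * ((m:ℝ) * L - Real.log (σ * P)) := by
    rw [hlogt]; ring
  linarith [hC, h6, hmain, hid.le, hid.ge]

lemma aux_sq_le (m : ℕ) : (m + 1) ^ 2 ≤ 2 ^ (m + 2) := by
  induction m with
  | zero => norm_num
  | succ n ih =>
    rcases Nat.lt_or_ge n 2 with h | h
    · interval_cases n <;> norm_num
    · calc (n + 1 + 1) ^ 2 ≤ 2 * (n + 1) ^ 2 := by nlinarith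
        _ ≤ 2 * 2 ^ (n + 2) := Nat.mul_le_mul_left 2 ih
        _ = 2 ^ (n + 1 + 2) := by ring

/-- Edmunds–Netrusov counting lemma: if `E_0,…,E_m` are pairwise disjoint non-empty
finite sets with `#E_i ≤ 2^{m+2^i}`, and `ℱ` is the family of tuples `(F_i)` of subsets
`F_i ⊆ E_i` with `∑ (#F_i)/2^{m-i} ≤ 1`, then `log₂(#ℱ) ≤ 2^{m+3}`. -/
theorem stmt_11 (m : ℕ) (E : Fin (m + 1) → Finset ℕ)
    (hdisj : ∀ i j, i ≠ j → Disjoint (E i) (E j))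
    (hne : ∀ i, (E i).Nonempty)
    (hcard : ∀ i : Fin (m + 1), (E i).card ≤ 2 ^ (m + 2 ^ (i : ℕ))) :
    Real.logb 2
      (Nat.card {F : Fin (m + 1) → Finset ℕ //
        (∀ i, F i ⊆ E i) ∧ ∑ i : Fin (m + 1), ((F i).card : ℝ) / 2 ^ (m - (i : ℕ)) ≤ 1})
      ≤ 2 ^ (m + 3) := by
  classical
  set cond : (Fin (m + 1) → Finset ℕ) → Prop := fun F =>
    (∀ i, F i ⊆ E i) ∧ ∑ i : Fin (m + 1), ((F i).card : ℝ) / 2 ^ (m - (i : ℕ)) ≤ 1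
    with hcond
  set P : Finset (Fin (m + 1) → Finset ℕ) := Fintype.piFinset fun i => (E i).powerset with hP
  set S : Finset (Fin (m + 1) → Finset ℕ) := P.filter cond with hS
  -- identify Nat.card with S.card
  have hcardeq : Nat.card {F : Fin (m + 1) → Finset ℕ // cond F} = S.card := by
    rw [Nat.card_congr (Equiv.subtypeEquivRight (q := fun F => F ∈ S) ?_),
      Nat.card_eq_finsetCard]
    intro F
    simp only [hS, Finset.mem_filter, hP, Fintype.mem_piFinset, Finset.mem_powerset]
    exact ⟨fun h => ⟨h.1, h⟩, fun h => h.2⟩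
  rw [show (Nat.card {F : Fin (m + 1) → Finset ℕ //
        (∀ i, F i ⊆ E i) ∧ ∑ i : Fin (m + 1), ((F i).card : ℝ) / 2 ^ (m - (i : ℕ)) ≤ 1})
      = S.card from hcardeq]
  -- the real constraint implies the integer constraint
  have hconv : ∀ F : Fin (m + 1) → Finset ℕ, cond F →
      ∑ i : Fin (m + 1), (F i).card * 2 ^ (i : ℕ) ≤ 2 ^ m := by
    intro F hF
    have hre : ∀ i : Fin (m + 1),
        ((F i).card : ℝ) * 2 ^ (i : ℕ) / 2 ^ m = ((F i).card : ℝ) / 2 ^ (m - (i : ℕ)) := by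
      intro i
      have hi : (i : ℕ) ≤ m := Nat.lt_succ_iff.mp i.isLt
      rw [div_eq_div_iff (by positivity) (by positivity), mul_assoc, ← pow_add]
      rw [show (i : ℕ) + (m - (i : ℕ)) = m from by omega]
    have h1 : (∑ i : Fin (m + 1), ((F i).card : ℝ) * 2 ^ (i : ℕ)) / 2 ^ m ≤ 1 := by
      rw [Finset.sum_div]
      simpa only [hre] using hF.2
    have h2 : (∑ i : Fin (m + 1), ((F i).card : ℝ) * 2 ^ (i : ℕ)) ≤ 2 ^ m := by
      rw [div_le_one (by positivity)] at h1; exact h1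
    exact_mod_cast h2
  -- the set of admissible cardinality tuples
  set T : Finset (Fin (m + 1) → ℕ) :=
    (Fintype.piFinset fun _ => Finset.range (2 ^ m + 1)).filter
      (fun s => ∑ i : Fin (m + 1), s i * 2 ^ (i : ℕ) ≤ 2 ^ m) with hT
  have hmap : ∀ F ∈ S, (fun i => (F i).card) ∈ T := by
    intro F hF
    rw [hS, Finset.mem_filter] at hF
    have hsum := hconv F hF.2
    rw [hT, Finset.mem_filter, Fintype.mem_piFinset]
    refine ⟨fun i => Finset.mem_range.mpr ?_, hsum⟩
    have h1 : (F i).card * 2 ^ (i : ℕ) ≤ 2 ^ m :=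
      le_trans (Finset.single_le_sum (f := fun j : Fin (m+1) => (F j).card * 2 ^ (j : ℕ))
        (fun _ _ => Nat.zero_le _) (Finset.mem_univ i)) hsum
    have h2 : (F i).card ≤ (F i).card * 2 ^ (i : ℕ) :=
      Nat.le_mul_of_pos_right _ (Nat.pow_pos (by norm_num))
    omega
  -- fiberwise counting
  have hST : S.card ≤ ∑ s ∈ T, ∏ i : Fin (m + 1), ((E i).card.choose (s i)) := by
    rw [Finset.card_eq_sum_card_fiberwise hmap]
    apply Finset.sum_le_sum
    intro s hs
    have hsub : S.filter (fun F => (fun i => (F i).card) = s) ⊆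
        Fintype.piFinset fun i => (E i).powersetCard (s i) := by
      intro F hF
      rw [Finset.mem_filter] at hF
      obtain ⟨hFS, hFs⟩ := hF
      rw [hS, Finset.mem_filter] at hFS
      rw [Fintype.mem_piFinset]
      intro i
      rw [Finset.mem_powersetCard]
      exact ⟨hFS.2.1 i, congrFun hFs i⟩
    calc (S.filter (fun F => (fun i => (F i).card) = s)).card
        ≤ (Fintype.piFinset fun i => (E i).powersetCard (s i)).card :=
          Finset.card_le_card hsub
      _ = ∏ i : Fin (m + 1), ((E i).card.choose (s i)) := by
          rw [Fintype.card_piFinset]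
          exact Finset.prod_congr rfl fun i _ => Finset.card_powersetCard _ _
  -- real bound on each product
  set L := Real.log 2 with hL
  have hL0 : (0 : ℝ) < L := Real.log_pos (by norm_num)
  set B : ℝ := (L + 1) * 2 ^ m + 2 * 2 ^ m / Real.exp 1 with hB
  have hprodB : ∀ s ∈ T, ((∏ i : Fin (m + 1), ((E i).card.choose (s i)) : ℕ) : ℝ)
      ≤ Real.exp B := by
    intro s hs
    rw [hT, Finset.mem_filter] at hs
    push_cast
    calc (∏ i : Fin (m + 1), (((E i).card.choose (s i) : ℝ)))
        ≤ ∏ i : Fin (m + 1), Real.exp ((s i : ℝ) * 2 ^ (i : ℕ) * L + (s i : ℝ) * 2 ^ (i : ℕ)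
            + 2 ^ m / (Real.exp 1 * 2 ^ (i : ℕ))) := by
          apply Finset.prod_le_prod (fun i _ => by positivity)
          intro i _
          exact aux_key m (i : ℕ) _ (s i) (hcard i)
      _ = Real.exp (∑ i : Fin (m + 1), ((s i : ℝ) * 2 ^ (i : ℕ) * L + (s i : ℝ) * 2 ^ (i : ℕ)
            + 2 ^ m / (Real.exp 1 * 2 ^ (i : ℕ)))) := (Real.exp_sum _ _).symm
      _ ≤ Real.exp B := by
          apply Real.exp_le_exp.mpr
          rw [Finset.sum_add_distrib, Finset.sum_add_distrib]
          have hsum : (∑ i : Fin (m + 1), (s i : ℝ) * 2 ^ (i : ℕ)) ≤ 2 ^ m := by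
            exact_mod_cast hs.2
          have hgeo : (∑ i : Fin (m + 1), (2:ℝ) ^ m / (Real.exp 1 * 2 ^ (i : ℕ)))
              ≤ 2 * 2 ^ m / Real.exp 1 := by
            have h1 : ∀ i : Fin (m + 1), (2:ℝ) ^ m / (Real.exp 1 * 2 ^ (i : ℕ))
                = (2 ^ m / Real.exp 1) * (1 / 2 : ℝ) ^ (i : ℕ) := by
              intro i
              rw [div_pow, one_pow, div_mul_div_comm, mul_one]
            rw [Finset.sum_congr rfl fun i _ => h1 i, ← Finset.mul_sum]
            have h2 : (∑ i : Fin (m + 1), (1 / 2 : ℝ) ^ (i : ℕ)) ≤ 2 := by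
              rw [Fin.sum_univ_eq_sum_range (fun i => (1 / 2 : ℝ) ^ i) (m + 1)]
              exact sum_geometric_two_le _
            have h3 : (0:ℝ) ≤ 2 ^ m / Real.exp 1 := by positivity
            calc (2 ^ m / Real.exp 1) * (∑ i : Fin (m + 1), (1 / 2 : ℝ) ^ (i : ℕ))
                ≤ (2 ^ m / Real.exp 1) * 2 := mul_le_mul_of_nonneg_left h2 h3
              _ = 2 * 2 ^ m / Real.exp 1 := by ring
          have hsum1 : (∑ i : Fin (m + 1), (s i : ℝ) * 2 ^ (i : ℕ) * L) ≤ 2 ^ m * L := by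
            rw [← Finset.sum_mul]
            exact mul_le_mul_of_nonneg_right hsum hL0.le
          rw [hB]; linarith
  -- bound on the number of admissible tuples
  have hTcard : T.card ≤ 2 ^ ((m + 1) * (m + 1)) := by
    calc T.card ≤ (Fintype.piFinset fun _ : Fin (m + 1) => Finset.range (2 ^ m + 1)).card :=
          Finset.card_filter_le _ _
      _ = (2 ^ m + 1) ^ (m + 1) := by
          rw [Fintype.card_piFinset_const, Finset.card_range]
      _ ≤ (2 ^ (m + 1)) ^ (m + 1) := by
          apply Nat.pow_le_pow_left
          have h1 : 1 ≤ 2 ^ m := Nat.one_le_two_pow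
          have h2 : 2 ^ (m + 1) = 2 ^ m + 2 ^ m := by ring
          linarith
      _ = 2 ^ ((m + 1) * (m + 1)) := by rw [← pow_mul]
  -- S is nonempty
  have hSpos : 0 < S.card := by
    apply Finset.card_pos.mpr
    refine ⟨fun _ => ∅, ?_⟩
    rw [hS, Finset.mem_filter]
    constructor
    · rw [hP, Fintype.mem_piFinset]
      exact fun i => Finset.mem_powerset.mpr (Finset.empty_subset _)
    · exact ⟨fun i => Finset.empty_subset _, by simp⟩
  -- T is nonempty
  have hTpos : 0 < T.card := by
    apply Finset.card_pos.mpr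
    refine ⟨fun _ => 0, ?_⟩
    rw [hT, Finset.mem_filter, Fintype.mem_piFinset]
    exact ⟨fun i => Finset.mem_range.mpr (by positivity), by simp⟩
  -- assemble
  have hXle : (S.card : ℝ) ≤ (T.card : ℝ) * Real.exp B := by
    calc (S.card : ℝ) ≤ ((∑ s ∈ T, ∏ i : Fin (m + 1), ((E i).card.choose (s i)) : ℕ) : ℝ) := by
          exact_mod_cast hST
      _ = ∑ s ∈ T, ((∏ i : Fin (m + 1), ((E i).card.choose (s i)) : ℕ) : ℝ) := by push_cast; rfl
      _ ≤ ∑ s ∈ T, Real.exp B := Finset.sum_le_sum hprodB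
      _ = (T.card : ℝ) * Real.exp B := by rw [Finset.sum_const, nsmul_eq_mul]
  rw [Real.logb, div_le_iff₀ hL0]
  have hScast : (0:ℝ) < (S.card : ℝ) := by exact_mod_cast hSpos
  have hTcast : (0:ℝ) < (T.card : ℝ) := by exact_mod_cast hTpos
  have hlog : Real.log (S.card : ℝ) ≤ Real.log ((T.card : ℝ)) + B := by
    have h := Real.log_le_log hScast hXle
    rwa [Real.log_mul hTcast.ne' (Real.exp_ne_zero B), Real.log_exp] at h
  have hlogT : Real.log ((T.card : ℝ)) ≤ (((m + 1) * (m + 1) : ℕ) : ℝ) * L := by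
    have h := Real.log_le_log hTcast
      (show ((T.card : ℝ)) ≤ 2 ^ ((m + 1) * (m + 1)) by exact_mod_cast hTcard)
    rwa [Real.log_pow] at h
  have hmm : (((m + 1) * (m + 1) : ℕ) : ℝ) ≤ 4 * 2 ^ m := by
    have h := aux_sq_le m
    rw [pow_two] at h
    have h2 : ((m + 1) * (m + 1) : ℕ) ≤ 4 * 2 ^ m := by
      calc (m + 1) * (m + 1) ≤ 2 ^ (m + 2) := h
        _ = 4 * 2 ^ m := by ring
    exact_mod_cast h2
  have he : (2.7 : ℝ) < Real.exp 1 := lt_trans (by norm_num) Real.exp_one_gt_d9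
  have hLlb : (0.6931471803 : ℝ) < L := Real.log_two_gt_d9
  have h2e : (2 : ℝ) / Real.exp 1 < 0.75 := by
    rw [div_lt_iff₀ (Real.exp_pos 1)]; nlinarith
  have hkey : (0:ℝ) ≤ 3 * L - 1 - 2 / Real.exp 1 := by linarith
  have hp : (0:ℝ) < (2:ℝ) ^ m := by positivity
  have hfinal : Real.log ((T.card : ℝ)) + B ≤ 2 ^ (m + 3) * L := by
    have h1 : Real.log ((T.card : ℝ)) ≤ 4 * 2 ^ m * L :=
      hlogT.trans (mul_le_mul_of_nonneg_right hmm hL0.le)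
    have h2 : (0:ℝ) ≤ 2 ^ m * (3 * L - 1 - 2 / Real.exp 1) := mul_nonneg hp.le hkey
    have h3 : (2:ℝ) ^ (m + 3) = 8 * 2 ^ m := by ring
    have hkey' : 2 ^ m * (1 + 2 / Real.exp 1) ≤ 2 ^ m * (3 * L) :=
      mul_le_mul_of_nonneg_left (by linarith) hp.le
    rw [h3, hB]
    calc Real.log ((T.card : ℝ)) + ((L + 1) * 2 ^ m + 2 * 2 ^ m / Real.exp 1)
        ≤ 4 * 2 ^ m * L + ((L + 1) * 2 ^ m + 2 * 2 ^ m / Real.exp 1) := by linarith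
      _ = 4 * 2 ^ m * L + L * 2 ^ m + 2 ^ m * (1 + 2 / Real.exp 1) := by ring
      _ ≤ 4 * 2 ^ m * L + L * 2 ^ m + 2 ^ m * (3 * L) := by linarith
      _ = 8 * 2 ^ m * L := by ring
  linarith [hlog, hfinal]
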